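/- Every infinite Hausdorff topological space X has at least 𝔠 open subsets, i.e., the cardinality of the family of all open subsets of X is at least 2^{ℵ₀}. -/

import Mathlib

universe u

open Cardinal

open Set in
/-- Splitting step: every infinite open set in a T2 space contains a nonempty open set and
a disjoint infinite open set. -/
lemma stmt16_step {X : Type u} [TopologicalSpace X] [T2Space X]
    (V : Set X) (hVo : IsOpen V) (hVi : V.Infinite) :
    ∃ U W : Set X, IsOpen U ∧ U.Nonempty ∧ IsOpen W ∧ W.Infinite ∧ Disjoint U W ∧
      U ⊆ V ∧ W ⊆ V := by
  obtain ⟨x, hx, y, hy, hxy⟩ := hVi.nontrivial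
  obtain ⟨A, B, hA, hB, hxA, hyB, hAB⟩ := t2_separation hxy
  by_cases h : (V ∩ A).Infinite
  · exact ⟨V ∩ B, V ∩ A, hVo.inter hB, ⟨y, hy, hyB⟩, hVo.inter hA, h,
      hAB.symm.mono inter_subset_right inter_subset_right,
      inter_subset_left, inter_subset_left⟩
  · have hfin : (V ∩ A).Finite := not_infinite.mp h
    refine ⟨(V ∩ A) \ ((V ∩ A) \ {x}), V \ (V ∩ A), ?_, ⟨x, ⟨⟨hx, hxA⟩, ?_⟩⟩,
      hVo.sdiff hfin.isClosed, hVi.diff hfin, ?_, fun z hz => hz.1.1, diff_subset⟩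
    · exact (hVo.inter hA).sdiff ((hfin.diff).isClosed)
    · simp
    · exact disjoint_sdiff_right.mono_left diff_subset

/-- Every infinite Hausdorff topological space has at least `𝔠 = 2^{ℵ₀}` open subsets. -/
theorem stmt16 (X : Type u) [TopologicalSpace X] [T2Space X] [Infinite X] :
    continuum ≤ Cardinal.mk {U : Set X // IsOpen U} := by
  classical
  -- choice functions for the splitting step
  have H : ∀ V : Set X, IsOpen V → V.Infinite →
      ∃ U W : Set X, IsOpen U ∧ U.Nonempty ∧ IsOpen W ∧ W.Infinite ∧ Disjoint U W ∧
        U ⊆ V ∧ W ⊆ V := fun V hVo hVi => stmt16_step V hVo hVi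
  choose! U' W' hUo hUne hWo hWi hdisj hUV hWV using H
  -- the decreasing chain of infinite open sets
  let chain : ℕ → Set X := fun n => Nat.rec Set.univ (fun _ V => W' V) n
  have hchain0 : chain 0 = Set.univ := rfl
  have hchainS : ∀ n, chain (n + 1) = W' (chain n) := fun n => rfl
  have inv : ∀ n, IsOpen (chain n) ∧ (chain n).Infinite := by
    intro n
    induction n with
    | zero => exact ⟨isOpen_univ, Set.infinite_univ⟩
    | succ n ih => exact ⟨hWo _ ih.1 ih.2, hWi _ ih.1 ih.2⟩
  -- the pairwise disjoint family of nonempty open sets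
  set Us : ℕ → Set X := fun n => U' (chain n) with hUs
  have hUsOpen : ∀ n, IsOpen (Us n) := fun n => hUo _ (inv n).1 (inv n).2
  have hUsNe : ∀ n, (Us n).Nonempty := fun n => hUne _ (inv n).1 (inv n).2
  have hchain_mono : ∀ n m, n ≤ m → chain m ⊆ chain n := by
    intro n m hnm
    induction m with
    | zero => exact Nat.le_zero.mp hnm ▸ subset_rfl
    | succ m ih =>
      rcases Nat.lt_or_ge n (m + 1) with h | h
      · have : chain (m + 1) ⊆ chain m := by
          rw [hchainS m]; exact hWV _ (inv m).1 (inv m).2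
        exact this.trans (ih (Nat.lt_succ_iff.mp h))
      · have : n = m + 1 := le_antisymm hnm h
        exact this ▸ subset_rfl
  have hUsDisj : ∀ n m, n < m → Disjoint (Us n) (Us m) := by
    intro n m hnm
    have h1 : Us m ⊆ chain m := hUV _ (inv m).1 (inv m).2
    have h2 : chain m ⊆ chain (n + 1) := hchain_mono _ _ hnm
    have h3 : chain (n + 1) = W' (chain n) := hchainS n
    have := hdisj _ (inv n).1 (inv n).2
    exact this.mono_right ((h1.trans h2).trans (le_of_eq h3))
  have hUsDisj' : ∀ n m, n ≠ m → Disjoint (Us n) (Us m) := by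
    intro n m h
    rcases lt_or_gt_of_ne h with h' | h'
    · exact hUsDisj n m h'
    · exact (hUsDisj m n h').symm
  -- inject `Set ℕ` into the open sets
  let f : Set ℕ → {U : Set X // IsOpen U} :=
    fun S => ⟨⋃ n ∈ S, Us n, isOpen_biUnion fun n _ => hUsOpen n⟩
  have hsub : ∀ S T : Set ℕ, (⋃ n ∈ S, Us n) ⊆ (⋃ n ∈ T, Us n) → S ⊆ T := by
    intro S T h n hn
    obtain ⟨x, hx⟩ := hUsNe n
    have hx' : x ∈ ⋃ m ∈ T, Us m := h (Set.mem_biUnion hn hx)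
    obtain ⟨m, hm, hxm⟩ := Set.mem_iUnion₂.mp hx'
    by_cases hne : n = m
    · exact hne ▸ hm
    · exact absurd (Set.not_disjoint_iff.mpr ⟨x, hx, hxm⟩) (fun c => c (hUsDisj' n m hne))
  have hf : Function.Injective f := by
    intro S T hST
    have h' : (⋃ n ∈ S, Us n) = (⋃ n ∈ T, Us n) := congrArg Subtype.val hST
    exact le_antisymm (hsub S T h'.le) (hsub T S h'.ge)
  have key : Cardinal.lift.{u} (Cardinal.mk (Set ℕ)) ≤
      Cardinal.lift.{0} (Cardinal.mk {U : Set X // IsOpen U}) :=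
    Cardinal.lift_mk_le'.mpr ⟨⟨f, hf⟩⟩
  simpa [Cardinal.mk_set, Cardinal.mk_nat, Cardinal.two_power_aleph0,
    Cardinal.lift_continuum, Cardinal.lift_uzero] using key
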